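/- Let (A_1,B_1),...,(A_m,B_m) be pairs of finite sets with |A_i| = a and |B_i| = b for every 1 ≤ i ≤ m. Suppose that A_i ∩ B_i = ∅ for all 1 ≤ i ≤ m, and A_i ∩ B_j ≠ ∅ for all i ≠ j. Then m ≤ C(a+b, a), where C denotes the binomial coefficient. -/

import Mathlib

open Finset Function

namespace BollobasAux

variable {n : ℕ}

/-- Rank of `y` in the finset `s` (number of smaller elements), junk `0` if `y ∉ s`. -/
noncomputable def rk (s : Finset (Fin n)) (y : Fin n) : ℕ :=
  if h : y ∈ s then ((s.orderIsoOfFin rfl).symm ⟨y, h⟩ : Fin s.card).val else 0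

lemma rk_lt {s : Finset (Fin n)} {y : Fin n} (h : y ∈ s) : rk s y < s.card := by
  rw [rk, dif_pos h]
  exact ((s.orderIsoOfFin rfl).symm ⟨y, h⟩).isLt

lemma rk_inj {s : Finset (Fin n)} {y z : Fin n} (hy : y ∈ s) (hz : z ∈ s)
    (h : rk s y = rk s z) : y = z := by
  rw [rk, dif_pos hy, rk, dif_pos hz] at h
  have h2 : (s.orderIsoOfFin rfl).symm ⟨y, hy⟩ = (s.orderIsoOfFin rfl).symm ⟨z, hz⟩ :=
    Fin.ext h
  have := (s.orderIsoOfFin rfl).symm.toEquiv.injective h2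
  simpa using this

/-- The `k`-th smallest element of `s`, default `d` if out of range. -/
noncomputable def unrk (s : Finset (Fin n)) (k : ℕ) (d : Fin n) : Fin n :=
  if h : k < s.card then ↑(s.orderIsoOfFin rfl ⟨k, h⟩) else d

lemma unrk_mem {s : Finset (Fin n)} {k : ℕ} {d : Fin n} (h : k < s.card) :
    unrk s k d ∈ s := by
  rw [unrk, dif_pos h]
  exact (s.orderIsoOfFin rfl ⟨k, h⟩).2

lemma unrk_lt_unrk {s : Finset (Fin n)} {k l : ℕ} {d d' : Fin n}
    (hkl : k < l) (hl : l < s.card) : unrk s k d < unrk s l d' := by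
  rw [unrk, dif_pos (hkl.trans hl), unrk, dif_pos hl]
  exact Subtype.coe_lt_coe.mpr ((s.orderIsoOfFin rfl).lt_iff_lt.mpr (Fin.mk_lt_mk.mpr hkl))

lemma unrk_inj {s : Finset (Fin n)} {k l : ℕ} {d d' : Fin n}
    (hk : k < s.card) (hl : l < s.card) (h : unrk s k d = unrk s l d') : k = l := by
  rw [unrk, dif_pos hk, unrk, dif_pos hl] at h
  have := (s.orderIsoOfFin rfl).toEquiv.injective (Subtype.ext h)
  simpa using this

/-- The rearrangement map: put the images of `A` (in order) on the smallest positions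
occupied by `σ '' (A ∪ B)`, then the images of `B`. -/
noncomputable def psi (A B : Finset (Fin n)) (σ : Fin n → Fin n) (x : Fin n) : Fin n :=
  if x ∈ A then unrk ((A ∪ B).image σ) (rk (A.image σ) (σ x)) (σ x)
  else if x ∈ B then
    unrk ((A ∪ B).image σ) ((A.image σ).card + rk (B.image σ) (σ x)) (σ x)
  else σ x

variable {A B : Finset (Fin n)} {σ : Fin n → Fin n}

lemma cardP (hσ : Injective σ) (hd : Disjoint A B) :
    ((A ∪ B).image σ).card = (A.image σ).card + (B.image σ).card := by
  rw [image_union]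
  exact card_union_of_disjoint ((disjoint_image hσ).mpr hd)

lemma rkA_lt {x : Fin n} (hx : x ∈ A) :
    rk (A.image σ) (σ x) < ((A ∪ B).image σ).card :=
  lt_of_lt_of_le (rk_lt (mem_image_of_mem σ hx))
    (card_le_card (image_subset_image subset_union_left))

lemma rkB_lt (hσ : Injective σ) (hd : Disjoint A B) {x : Fin n} (hx : x ∈ B) :
    (A.image σ).card + rk (B.image σ) (σ x) < ((A ∪ B).image σ).card := by
  have h1 := rk_lt (mem_image_of_mem σ hx)
  rw [cardP hσ hd]
  omega

lemma psi_lt (hσ : Injective σ) (hd : Disjoint A B) {x y : Fin n}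
    (hx : x ∈ A) (hy : y ∈ B) : psi A B σ x < psi A B σ y := by
  have hyA : y ∉ A := disjoint_right.mp hd hy
  rw [psi, if_pos hx, psi, if_neg hyA, if_pos hy]
  refine unrk_lt_unrk ?_ (rkB_lt hσ hd hy)
  have := rk_lt (mem_image_of_mem σ hx)
  omega

lemma psi_mem (hσ : Injective σ) (hd : Disjoint A B) {x : Fin n} (hx : x ∈ A ∪ B) :
    psi A B σ x ∈ (A ∪ B).image σ := by
  rcases mem_union.mp hx with hxa | hxb
  · rw [psi, if_pos hxa]; exact unrk_mem (rkA_lt hxa)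
  · have hxA : x ∉ A := disjoint_right.mp hd hxb
    rw [psi, if_neg hxA, if_pos hxb]
    exact unrk_mem (rkB_lt hσ hd hxb)

lemma psi_not_mem {x : Fin n} (hx : x ∉ A ∪ B) : psi A B σ x = σ x := by
  rw [mem_union, not_or] at hx
  rw [psi, if_neg hx.1, if_neg hx.2]

lemma psi_out_ne (hσ : Injective σ) (hd : Disjoint A B) {x y : Fin n}
    (hx : x ∈ A ∪ B) (hy : y ∉ A ∪ B) : psi A B σ x ≠ psi A B σ y := by
  intro h
  have h1 : σ y ∈ (A ∪ B).image σ := by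
    have h2 := psi_mem hσ hd hx
    rwa [h, psi_not_mem hy] at h2
  obtain ⟨z, hz, hzz⟩ := mem_image.mp h1
  exact hy (hσ hzz ▸ hz)

lemma psi_injective (hσ : Injective σ) (hd : Disjoint A B) : Injective (psi A B σ) := by
  intro x y hxy
  by_cases hx : x ∈ A ∪ B <;> by_cases hy : y ∈ A ∪ B
  · rcases mem_union.mp hx with hxa | hxb <;> rcases mem_union.mp hy with hya | hyb
    · rw [psi, if_pos hxa, psi, if_pos hya] at hxy
      have := unrk_inj (rkA_lt hxa) (rkA_lt hya) hxy
      exact hσ (rk_inj (mem_image_of_mem σ hxa) (mem_image_of_mem σ hya) this)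
    · exact absurd hxy (ne_of_lt (psi_lt hσ hd hxa hyb))
    · exact absurd hxy.symm (ne_of_lt (psi_lt hσ hd hya hxb))
    · have hxA : x ∉ A := disjoint_right.mp hd hxb
      have hyA : y ∉ A := disjoint_right.mp hd hyb
      rw [psi, if_neg hxA, if_pos hxb, psi, if_neg hyA, if_pos hyb] at hxy
      have := unrk_inj (rkB_lt hσ hd hxb) (rkB_lt hσ hd hyb) hxy
      have h2 : rk (B.image σ) (σ x) = rk (B.image σ) (σ y) := by omega
      exact hσ (rk_inj (mem_image_of_mem σ hxb) (mem_image_of_mem σ hyb) h2)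
  · exact absurd hxy (psi_out_ne hσ hd hx hy)
  · exact absurd hxy.symm (psi_out_ne hσ hd hy hx)
  · rw [psi_not_mem hx, psi_not_mem hy] at hxy
    exact hσ hxy

lemma psi_image (hσ : Injective σ) (hd : Disjoint A B) :
    (A ∪ B).image (psi A B σ) = (A ∪ B).image σ := by
  apply eq_of_subset_of_card_le
  · intro z hz
    obtain ⟨x, hx, rfl⟩ := mem_image.mp hz
    exact psi_mem hσ hd hx
  · rw [card_image_of_injective _ hσ, card_image_of_injective _ (psi_injective hσ hd)]

lemma psi_cancel {σ' : Fin n → Fin n} (hσ : Injective σ) (hσ' : Injective σ')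
    (hd : Disjoint A B) (hpsi : psi A B σ = psi A B σ') (hQ : A.image σ = A.image σ') :
    σ = σ' := by
  have hP : (A ∪ B).image σ = (A ∪ B).image σ' := by
    rw [← psi_image hσ hd, ← psi_image hσ' hd, hpsi]
  have hQb : B.image σ = B.image σ' := by
    have h1 : ∀ τ : Fin n → Fin n, Injective τ →
        B.image τ = ((A ∪ B).image τ) \ (A.image τ) := by
      intro τ hτ
      rw [image_union]
      exact (union_sdiff_cancel_left ((disjoint_image hτ).mpr hd)).symm
    rw [h1 σ hσ, h1 σ' hσ', hP, hQ]
  funext x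
  by_cases hxa : x ∈ A
  · have e1 := congrFun hpsi x
    rw [psi, if_pos hxa, psi, if_pos hxa, hQ, hP] at e1
    have hm : σ x ∈ A.image σ' := hQ ▸ mem_image_of_mem σ hxa
    have hb1 : rk (A.image σ') (σ x) < ((A ∪ B).image σ').card :=
      lt_of_lt_of_le (rk_lt hm) (card_le_card (image_subset_image subset_union_left))
    have := unrk_inj hb1 (rkA_lt hxa) e1
    exact rk_inj hm (mem_image_of_mem σ' hxa) this
  · by_cases hxb : x ∈ B
    · have e1 := congrFun hpsi x
      rw [psi, if_neg hxa, if_pos hxb, psi, if_neg hxa, if_pos hxb, hQ, hQb, hP] at e1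
      have hm : σ x ∈ B.image σ' := hQb ▸ mem_image_of_mem σ hxb
      have hb1 : (A.image σ').card + rk (B.image σ') (σ x) < ((A ∪ B).image σ').card := by
        have := rk_lt hm
        rw [cardP hσ' hd]
        omega
      have h2 := unrk_inj hb1 (rkB_lt hσ' hd hxb) e1
      have h3 : rk (B.image σ') (σ x) = rk (B.image σ') (σ' x) := by omega
      exact rk_inj hm (mem_image_of_mem σ' hxb) h3
    · have e1 := congrFun hpsi x
      rwa [psi_not_mem (by simp [hxa, hxb]), psi_not_mem (by simp [hxa, hxb])] at e1

lemma card_T (n : ℕ) :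
    (Finset.univ.filter (fun f : Fin n → Fin n => Injective f)).card = n.factorial := by
  rw [← Fintype.card_subtype,
    Fintype.card_congr (Equiv.subtypeInjectiveEquivEmbedding (Fin n) (Fin n)),
    Fintype.card_embedding_eq]
  simp [Nat.descFactorial_self]

lemma key (a b : ℕ) (A B : Finset (Fin n)) (hA : A.card = a) (hB : B.card = b)
    (hd : Disjoint A B) :
    n.factorial ≤ (a + b).choose a *
      (Finset.univ.filter (fun f : Fin n → Fin n =>
        Injective f ∧ ∀ x ∈ A, ∀ y ∈ B, f x < f y)).card := by
  classical
  set S := Finset.univ.filter (fun f : Fin n → Fin n =>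
      Injective f ∧ ∀ x ∈ A, ∀ y ∈ B, f x < f y) with hSdef
  set T := Finset.univ.filter (fun f : Fin n → Fin n => Injective f) with hTdef
  have hmap : ∀ σ ∈ T, psi A B σ ∈ S := by
    intro σ hσ
    rw [hTdef, mem_filter] at hσ
    rw [hSdef, mem_filter]
    exact ⟨mem_univ _, psi_injective hσ.2 hd, fun x hx y hy => psi_lt hσ.2 hd hx hy⟩
  have hsum := card_eq_sum_card_fiberwise hmap
  have hfib : ∀ τ ∈ S, (T.filter fun σ => psi A B σ = τ).card ≤ (a + b).choose a := by
    intro τ hτ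
    rw [hSdef, mem_filter] at hτ
    obtain ⟨-, hτinj, -⟩ := hτ
    have hPτ : ((A ∪ B).image τ).card = a + b := by
      rw [card_image_of_injective _ hτinj, card_union_of_disjoint hd, hA, hB]
    calc (T.filter fun σ => psi A B σ = τ).card
        ≤ (((A ∪ B).image τ).powersetCard a).card := by
          apply card_le_card_of_injOn (fun σ => A.image σ)
          · intro σ hσ
            rw [mem_coe, mem_filter, hTdef, mem_filter] at hσ
            obtain ⟨⟨-, hσinj⟩, hσψ⟩ := hσ
            beta_reduce
            rw [mem_coe, mem_powersetCard]
            refine ⟨?_, by rw [card_image_of_injective _ hσinj, hA]⟩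
            rw [← hσψ, psi_image hσinj hd]
            exact image_subset_image subset_union_left
          · intro σ hσ σ' hσ' hQ
            rw [mem_coe, mem_filter, hTdef, mem_filter] at hσ hσ'
            exact psi_cancel hσ.1.2 hσ'.1.2 hd (hσ.2.trans hσ'.2.symm) hQ
      _ = (a + b).choose a := by rw [card_powersetCard, hPτ]
  calc n.factorial = T.card := (card_T n).symm
    _ = ∑ τ ∈ S, (T.filter fun σ => psi A B σ = τ).card := hsum
    _ ≤ ∑ _τ ∈ S, (a + b).choose a := sum_le_sum hfib
    _ = (a + b).choose a * S.card := by rw [sum_const, smul_eq_mul, mul_comm]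

end BollobasAux

/-- Bollobás's theorem on cross-intersecting set-pair systems. -/
theorem bollobas_set_pairs {α : Type*} [DecidableEq α] (m a b : ℕ)
    (A B : Fin m → Finset α)
    (hA : ∀ i, (A i).card = a) (hB : ∀ i, (B i).card = b)
    (hdisj : ∀ i, A i ∩ B i = ∅)
    (hcross : ∀ i j, i ≠ j → (A i ∩ B j).Nonempty) :
    m ≤ (a + b).choose a := by
  classical
  open Finset Function BollobasAux in
  set U : Finset α := Finset.univ.biUnion (fun i => A i ∪ B i) with hU
  have hAU : ∀ i, A i ⊆ U := fun i x hx =>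
    mem_biUnion.mpr ⟨i, mem_univ i, mem_union_left _ hx⟩
  have hBU : ∀ i, B i ⊆ U := fun i x hx =>
    mem_biUnion.mpr ⟨i, mem_univ i, mem_union_right _ hx⟩
  set n := U.card with hn
  set e := U.equivFin with he
  set tr : Finset α → Finset (Fin n) :=
    fun s => ((s.subtype (· ∈ U)).map e.toEmbedding) with htr
  have hmemtr : ∀ (s : Finset α) (x : α) (hxU : x ∈ U), x ∈ s → e ⟨x, hxU⟩ ∈ tr s := by
    intro s x hxU hx
    rw [htr, mem_map]
    exact ⟨⟨x, hxU⟩, by rwa [mem_subtype], rfl⟩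
  have hmemtr' : ∀ (s : Finset α) (z : Fin n), z ∈ tr s → ∃ (x : α) (hxU : x ∈ U),
      x ∈ s ∧ z = e ⟨x, hxU⟩ := by
    intro s z hz
    rw [htr, mem_map] at hz
    obtain ⟨⟨x, hxU⟩, hx, rfl⟩ := hz
    exact ⟨x, hxU, by rwa [mem_subtype] at hx, rfl⟩
  have hcardtr : ∀ s : Finset α, s ⊆ U → (tr s).card = s.card := by
    intro s hs
    rw [htr, card_map, Finset.card_subtype, filter_true_of_mem (fun x hx => hs hx)]
  have hdisjtr : ∀ i, Disjoint (tr (A i)) (tr (B i)) := by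
    intro i
    rw [disjoint_left]
    intro z hza hzb
    obtain ⟨x, hxU, hxA, rfl⟩ := hmemtr' _ _ hza
    obtain ⟨y, hyU, hyB, hxy⟩ := hmemtr' _ _ hzb
    have : (⟨x, hxU⟩ : {t // t ∈ U}) = ⟨y, hyU⟩ := e.injective hxy
    have hxB : x ∈ B i := by
      rw [Subtype.mk.injEq] at this
      rwa [this]
    have : x ∈ A i ∩ B i := mem_inter.mpr ⟨hxA, hxB⟩
    rw [hdisj i] at this
    exact absurd this (notMem_empty x)
  have hcrosstr : ∀ i j, i ≠ j → ∃ z, z ∈ tr (A i) ∧ z ∈ tr (B j) := by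
    intro i j hij
    obtain ⟨y, hy⟩ := hcross i j hij
    rw [mem_inter] at hy
    refine ⟨e ⟨y, hAU i hy.1⟩, hmemtr _ _ _ hy.1, ?_⟩
    have := hmemtr (B j) y (hBU j hy.2) hy.2
    convert this using 3
  set S : Fin m → Finset (Fin n → Fin n) := fun i =>
    Finset.univ.filter (fun f : Fin n → Fin n =>
      Injective f ∧ ∀ x ∈ tr (A i), ∀ y ∈ tr (B i), f x < f y) with hS
  have hkey : ∀ i, n.factorial ≤ (a + b).choose a * (S i).card := fun i =>
    BollobasAux.key a b (tr (A i)) (tr (B i)) ((hcardtr _ (hAU i)).trans (hA i))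
      ((hcardtr _ (hBU i)).trans (hB i)) (hdisjtr i)
  set T := Finset.univ.filter (fun f : Fin n → Fin n => Injective f) with hT
  have hsub : ∀ i, S i ⊆ T := by
    intro i f hf
    rw [hS, mem_filter] at hf
    rw [hT, mem_filter]
    exact ⟨hf.1, hf.2.1⟩
  have hdisjS : ∀ i ∈ Finset.univ (α := Fin m), ∀ j ∈ Finset.univ (α := Fin m),
      i ≠ j → Disjoint (S i) (S j) := by
    intro i _ j _ hij
    rw [disjoint_left]
    intro f hfi hfj
    rw [hS, mem_filter] at hfi hfj
    obtain ⟨x, hx1, hx2⟩ := hcrosstr i j hij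
    obtain ⟨y, hy1, hy2⟩ := hcrosstr j i (Ne.symm hij)
    have h1 : f x < f y := hfi.2.2 x hx1 y hy2
    have h2 : f y < f x := hfj.2.2 y hy1 x hx2
    omega
  have hmain : m * n.factorial ≤ (a + b).choose a * n.factorial := by
    calc m * n.factorial = ∑ _i : Fin m, n.factorial := by
          rw [Finset.sum_const, smul_eq_mul, Finset.card_univ, Fintype.card_fin]
      _ ≤ ∑ i : Fin m, (a + b).choose a * (S i).card := Finset.sum_le_sum fun i _ => hkey i
      _ = (a + b).choose a * ∑ i : Fin m, (S i).card := by rw [Finset.mul_sum]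
      _ = (a + b).choose a * (Finset.univ.biUnion S).card := by
          rw [Finset.card_biUnion hdisjS]
      _ ≤ (a + b).choose a * T.card := by
          apply Nat.mul_le_mul_left
          apply Finset.card_le_card
          exact Finset.biUnion_subset.mpr fun i _ => hsub i
      _ = (a + b).choose a * n.factorial := by rw [BollobasAux.card_T n]
  exact Nat.le_of_mul_le_mul_right (by simpa [mul_comm] using hmain) n.factorial_pos
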